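/- Penalty error for zero switching cost: for each ρ ≥ 0 let u^ρ be the solution of the penalized equation with penalty parameter ρ and switching cost c = 0. Then (u^ρ) is componentwise nondecreasing in ρ and converges componentwise as ρ → ∞ to the vector 𝐮 = (ū,…,ū), where ū ∈ ℝ^N solves the limiting HJB-type problem min_{i∈I} F_i(𝐮)_l = 0 for all l ∈ {1,…,N}. If moreover F is locally Lipschitz continuous and there exist constants τ > 0 and σ > 0 such that π(y) ≥ τ·y^{1/σ} for all 0 ≤ y ≤ 2‖F(0)‖/γ, then there exists a constant C₁ > 0, independent of ρ, such that 0 ≤ 𝐮 − u^ρ ≤ C₁/ρ^σ componentwise for all ρ > 0. -/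
import Mathlib


open Filter Topology

noncomputable section

/-- A monotone system with constant `γ`: whenever `u i l - v i l` is the (nonnegative)
maximum of all differences, `F u i l - F v i l ≥ γ (u i l - v i l)`. -/
def IsMonotoneSystem {N d : ℕ} (γ : ℝ)
    (F : (Fin d → Fin N → ℝ) → Fin d → Fin N → ℝ) : Prop :=
  ∀ u v : Fin d → Fin N → ℝ, ∀ i : Fin d, ∀ l : Fin N,
    (∀ (j : Fin d) (k : Fin N), u j k - v j k ≤ u i l - v i l) →
    0 ≤ u i l - v i l →
    γ * (u i l - v i l) ≤ F u i l - F v i l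

/-- The intervention operator `(M_i u)_l = max_{j ≠ i} (u j l - c)`. -/
def Mop {N d : ℕ} (c : ℝ) (u : Fin d → Fin N → ℝ) (i : Fin d) (l : Fin N) : ℝ :=
  ⨆ j : {j : Fin d // j ≠ i}, (u j l - c)

/-- The sup-norm `‖u‖ = max_{i,l} |u i l|`. -/
def supNorm {N d : ℕ} (u : Fin d → Fin N → ℝ) : ℝ :=
  ⨆ p : Fin d × Fin N, |u p.1 p.2|

/-- A penalty function: continuous, non-decreasing, vanishing on `(-∞,0]` and
positive on `(0,∞)`. -/
def IsPenaltyFunction (π : ℝ → ℝ) : Prop :=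
  Continuous π ∧ Monotone π ∧ (∀ y : ℝ, y ≤ 0 → π y = 0) ∧ (∀ y : ℝ, 0 < y → 0 < π y)

/-- A concave system: each `F_i` is concave (componentwise). -/
def IsConcaveSystem {N d : ℕ}
    (F : (Fin d → Fin N → ℝ) → Fin d → Fin N → ℝ) : Prop :=
  ∀ (i : Fin d) (u v : Fin d → Fin N → ℝ) (θ : ℝ), 0 ≤ θ → θ ≤ 1 → ∀ l : Fin N,
    θ * F u i l + (1 - θ) * F v i l ≤ F (fun j k => θ * u j k + (1 - θ) * v j k) i l


lemma pen_nonneg {π : ℝ → ℝ} (hπ : IsPenaltyFunction π) (y : ℝ) : 0 ≤ π y := by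
  rcases le_or_gt y 0 with h | h
  · exact le_of_eq (hπ.2.2.1 y h).symm
  · exact (hπ.2.2.2 y h).le

lemma abs_le_supNorm {N d : ℕ} [Nonempty (Fin d)] [Nonempty (Fin N)]
    (u : Fin d → Fin N → ℝ) (i : Fin d) (l : Fin N) : |u i l| ≤ supNorm u :=
  le_ciSup (f := fun p : Fin d × Fin N => |u p.1 p.2|) (Set.Finite.bddAbove (Set.finite_range _)) ⟨i, l⟩

lemma supNorm_nonneg {N d : ℕ} [Nonempty (Fin d)] [Nonempty (Fin N)]
    (u : Fin d → Fin N → ℝ) : 0 ≤ supNorm u :=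
  le_trans (abs_nonneg _) (abs_le_supNorm u (Classical.arbitrary _) (Classical.arbitrary _))

lemma U_mono {N d : ℕ} [Nonempty (Fin d)] [Nonempty (Fin N)]
    {γ : ℝ} (hγ : 0 < γ) {F : (Fin d → Fin N → ℝ) → Fin d → Fin N → ℝ}
    (hFmono : IsMonotoneSystem γ F) {π : ℝ → ℝ} (hπ : IsPenaltyFunction π)
    {U : ℝ → Fin d → Fin N → ℝ}
    (hU : ∀ ρ : ℝ, 0 ≤ ρ → ∀ i l,
      F (U ρ) i l - ρ * ∑ j ∈ Finset.univ.erase i, π (U ρ j l - 0 - U ρ i l) = 0)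
    {ρ₁ ρ₂ : ℝ} (h1 : 0 ≤ ρ₁) (h12 : ρ₁ ≤ ρ₂) (i : Fin d) (l : Fin N) :
    U ρ₁ i l ≤ U ρ₂ i l := by
  obtain ⟨p, hp⟩ := Finite.exists_max (fun p : Fin d × Fin N => U ρ₁ p.1 p.2 - U ρ₂ p.1 p.2)
  by_contra hcon
  push_neg at hcon
  have hm : 0 < U ρ₁ p.1 p.2 - U ρ₂ p.1 p.2 := lt_of_lt_of_le (by linarith) (hp ⟨i, l⟩)
  have hmono := hFmono (U ρ₁) (U ρ₂) p.1 p.2 (fun j k => hp ⟨j, k⟩) hm.le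
  have e1 := hU ρ₁ h1 p.1 p.2
  have e2 := hU ρ₂ (h1.trans h12) p.1 p.2
  have hterm : ∀ j ∈ Finset.univ.erase p.1,
      π (U ρ₁ j p.2 - 0 - U ρ₁ p.1 p.2) ≤ π (U ρ₂ j p.2 - 0 - U ρ₂ p.1 p.2) := by
    intro j _
    exact hπ.2.1 (by have := hp ⟨j, p.2⟩; simp only at this; linarith)
  have s1 : (0:ℝ) ≤ ∑ j ∈ Finset.univ.erase p.1, π (U ρ₁ j p.2 - 0 - U ρ₁ p.1 p.2) :=
    Finset.sum_nonneg fun j _ => pen_nonneg hπ _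
  have hss := Finset.sum_le_sum hterm
  have h2 : (0:ℝ) ≤ ρ₂ := h1.trans h12
  nlinarith [mul_le_mul_of_nonneg_right h12 s1, mul_le_mul_of_nonneg_left hss h2]

lemma U_bound {N d : ℕ} [Nonempty (Fin d)] [Nonempty (Fin N)]
    {γ : ℝ} (hγ : 0 < γ) {F : (Fin d → Fin N → ℝ) → Fin d → Fin N → ℝ}
    (hFmono : IsMonotoneSystem γ F) {π : ℝ → ℝ} (hπ : IsPenaltyFunction π)
    {U : ℝ → Fin d → Fin N → ℝ}
    (hU : ∀ ρ : ℝ, 0 ≤ ρ → ∀ i l,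
      F (U ρ) i l - ρ * ∑ j ∈ Finset.univ.erase i, π (U ρ j l - 0 - U ρ i l) = 0)
    {ρ : ℝ} (hρ : 0 ≤ ρ) (i : Fin d) (l : Fin N) :
    |U ρ i l| ≤ supNorm (F 0) / γ := by
  obtain ⟨p, hp⟩ := Finite.exists_max (fun p : Fin d × Fin N => |U ρ p.1 p.2|)
  have key : |U ρ p.1 p.2| ≤ supNorm (F 0) / γ := by
    have e := hU ρ hρ p.1 p.2
    have hF0 : |F 0 p.1 p.2| ≤ supNorm (F 0) := abs_le_supNorm (F 0) p.1 p.2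
    have spos : (0:ℝ) ≤ ρ * ∑ j ∈ Finset.univ.erase p.1, π (U ρ j p.2 - 0 - U ρ p.1 p.2) :=
      mul_nonneg hρ (Finset.sum_nonneg fun j _ => pen_nonneg hπ _)
    rcases abs_cases (U ρ p.1 p.2) with ⟨he, hsgn⟩ | ⟨he, hsgn⟩
    · have hmono := hFmono (U ρ) 0 p.1 p.2
        (fun j k => by
          have h1 := hp ⟨j, k⟩
          have h2 := le_abs_self (U ρ j k)
          simp only [Pi.zero_apply]
          linarith)
        (by simp only [Pi.zero_apply]; linarith)
      have hz : ∑ j ∈ Finset.univ.erase p.1, π (U ρ j p.2 - 0 - U ρ p.1 p.2) = 0 := by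
        refine Finset.sum_eq_zero fun j _ => hπ.2.2.1 _ ?_
        have h1 := hp ⟨j, p.2⟩
        have h2 := le_abs_self (U ρ j p.2)
        simp only at h1
        linarith
      rw [hz, mul_zero] at e
      have : γ * |U ρ p.1 p.2| ≤ supNorm (F 0) := by
        simp only [Pi.zero_apply, sub_zero] at hmono
        have := abs_le.mp (abs_le_supNorm (F 0) p.1 p.2)
        rw [he]; linarith
      rw [le_div_iff₀ hγ]; linarith
    · have hmono := hFmono 0 (U ρ) p.1 p.2
        (fun j k => by
          have h1 := hp ⟨j, k⟩
          have h2 := neg_abs_le (U ρ j k)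
          simp only [Pi.zero_apply]
          linarith)
        (by simp only [Pi.zero_apply]; linarith)
      have : γ * |U ρ p.1 p.2| ≤ supNorm (F 0) := by
        simp only [Pi.zero_apply, zero_sub] at hmono
        have := abs_le.mp (abs_le_supNorm (F 0) p.1 p.2)
        rw [he]; linarith
      rw [le_div_iff₀ hγ]; linarith
  exact le_trans (hp ⟨i, l⟩) key

lemma LocallyLipschitz.exists_lipschitz_on_compact {α β : Type*} [MetricSpace α] [MetricSpace β]
    {f : α → β} (hf : LocallyLipschitz f) {s : Set α} (hs : IsCompact s) :
    ∃ L : ℝ, 0 ≤ L ∧ ∀ u ∈ s, ∀ v ∈ s, dist (f u) (f v) ≤ L * dist u v := by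
  rcases s.eq_empty_or_nonempty with rfl | hne
  · exact ⟨0, le_refl _, by simp⟩
  -- bound on image diameter
  obtain ⟨C, hC⟩ := Metric.isBounded_iff.mp (hs.image hf.continuous).isBounded
  -- local data
  choose K t ht hlip using hf
  have hr : ∀ x : α, ∃ r : ℝ, 0 < r ∧ Metric.ball x r ⊆ t x := fun x => by
    obtain ⟨r, hr0, hrb⟩ := Metric.mem_nhds_iff.mp (ht x)
    exact ⟨r, hr0, hrb⟩
  choose r hr0 hrb using hr
  -- finite subcover
  obtain ⟨T, hTs, hTfin, hcov⟩ := hs.elim_finite_subcover_image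
    (fun x _ => Metric.isOpen_ball (x := x) (ε := r x / 2))
    (fun x hx => Set.mem_biUnion hx (Metric.mem_ball_self (by linarith [hr0 x])))
  have hTne : T.Nonempty := by
    obtain ⟨x, hx⟩ := hne
    obtain ⟨y, hy, _⟩ := Set.mem_iUnion₂.mp (hcov hx)
    exact ⟨y, hy⟩
  lift T to Finset α using hTfin
  obtain ⟨x₀, hx₀'⟩ := hTne
  have hx₀ : x₀ ∈ T := Finset.mem_coe.mp hx₀'
  -- Lebesgue-type number
  set δ : ℝ := (T.image (fun x => r x / 2)).min' (by exact ⟨_, Finset.mem_image_of_mem _ hx₀⟩)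
  have hδpos : 0 < δ := by
    have := Finset.min'_mem (T.image (fun x => r x / 2)) ⟨_, Finset.mem_image_of_mem _ hx₀⟩
    obtain ⟨x, _, hxe⟩ := Finset.mem_image.mp this
    have h2 : 0 < r x / 2 := by linarith [hr0 x]
    calc (0:ℝ) < r x / 2 := h2
      _ = δ := hxe
  set Km : ℝ := (T.image (fun x => (K x : ℝ))).max' (by exact ⟨_, Finset.mem_image_of_mem _ hx₀⟩)
  have hKm : ∀ x ∈ T, (K x : ℝ) ≤ Km := fun x hx =>
    Finset.le_max' _ _ (Finset.mem_image_of_mem (fun x => (K x : ℝ)) hx)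
  set Cp : ℝ := max C 0
  refine ⟨max (max Km 0) (Cp / δ), le_max_of_le_left (le_max_right _ _), fun u hu v hv => ?_⟩
  rcases lt_or_ge (dist u v) δ with hlt | hge
  · obtain ⟨x, hxT, hux⟩ := Set.mem_iUnion₂.mp (hcov hu)
    have hxT' : x ∈ T := Finset.mem_coe.mp hxT
    have hδx : δ ≤ r x / 2 := Finset.min'_le _ _ (Finset.mem_image_of_mem _ hxT')
    have hux' : u ∈ Metric.ball x (r x) := by
      rw [Metric.mem_ball] at hux ⊢; linarith
    have hvx : v ∈ Metric.ball x (r x) := by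
      rw [Metric.mem_ball] at hux ⊢
      have := dist_triangle v u x
      rw [dist_comm v u] at this
      linarith
    have := (hlip x).dist_le_mul u (hrb x hux') v (hrb x hvx)
    calc dist (f u) (f v) ≤ (K x : ℝ) * dist u v := this
      _ ≤ max (max Km 0) (Cp / δ) * dist u v := by
          apply mul_le_mul_of_nonneg_right _ dist_nonneg
          exact le_max_of_le_left (le_max_of_le_left (hKm x hxT'))
  · have h1 : dist (f u) (f v) ≤ Cp :=
      le_trans (hC (Set.mem_image_of_mem f hu) (Set.mem_image_of_mem f hv)) (le_max_left _ _)
    calc dist (f u) (f v) ≤ Cp := h1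
      _ = (Cp / δ) * δ := by field_simp
      _ ≤ (Cp / δ) * dist u v := by
          apply mul_le_mul_of_nonneg_left hge (div_nonneg (le_max_right _ _) hδpos.le)
      _ ≤ max (max Km 0) (Cp / δ) * dist u v :=
          mul_le_mul_of_nonneg_right (le_max_right _ _) dist_nonneg

lemma comp_abs_le_norm {N d : ℕ} (u : Fin d → Fin N → ℝ) (i : Fin d) (l : Fin N) :
    |u i l| ≤ ‖u‖ :=
  le_trans (by rw [← Real.norm_eq_abs]; exact norm_le_pi_norm (u i) l) (norm_le_pi_norm u i)

lemma mem_cball_of_comp {N d : ℕ} {R : ℝ} (hR : 0 ≤ R) {u : Fin d → Fin N → ℝ}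
    (hu : ∀ i l, |u i l| ≤ R) : u ∈ Metric.closedBall (0 : Fin d → Fin N → ℝ) R := by
  rw [Metric.mem_closedBall, dist_zero_right, pi_norm_le_iff_of_nonneg hR]
  intro i
  rw [pi_norm_le_iff_of_nonneg hR]
  intro l
  rw [Real.norm_eq_abs]; exact hu i l

lemma exists_bound_on_ball {N d : ℕ}
    {F : (Fin d → Fin N → ℝ) → Fin d → Fin N → ℝ} (hFcont : Continuous F) (R : ℝ) :
    ∃ K : ℝ, 0 < K ∧ ∀ u : Fin d → Fin N → ℝ,
      u ∈ Metric.closedBall (0 : Fin d → Fin N → ℝ) R → ∀ i l, |F u i l| ≤ K := by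
  obtain ⟨C, hC⟩ := (isCompact_closedBall (0 : Fin d → Fin N → ℝ) R).exists_bound_of_continuousOn
    hFcont.continuousOn
  refine ⟨max C 0 + 1, by positivity, fun u hu i l => ?_⟩
  exact le_trans (comp_abs_le_norm (F u) i l) (by
    have := hC u hu
    have h2 := le_max_left C (0:ℝ)
    linarith)


/-- Penalty error for zero switching cost: monotone convergence to the solution of the
limiting HJB-type problem, with rate `C₁/ρ^σ` under local Lipschitz continuity of `F`
and a lower bound on the penalty function. -/
theorem penalty_error_zero_cost {N d : ℕ} (hN : 1 ≤ N) (hd : 2 ≤ d)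
    (γ : ℝ) (hγ : 0 < γ)
    (F : (Fin d → Fin N → ℝ) → Fin d → Fin N → ℝ)
    (hFcont : Continuous F) (hFmono : IsMonotoneSystem γ F)
    (π : ℝ → ℝ) (hπ : IsPenaltyFunction π)
    (U : ℝ → Fin d → Fin N → ℝ)
    (hU : ∀ ρ : ℝ, 0 ≤ ρ → ∀ i l,
      F (U ρ) i l - ρ * ∑ j ∈ Finset.univ.erase i, π (U ρ j l - 0 - U ρ i l) = 0) :
    ∃ ubar : Fin N → ℝ,
      (∀ l, (⨅ i : Fin d, F (fun _ => ubar) i l) = 0) ∧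
      (∀ ρ₁ ρ₂ : ℝ, 0 ≤ ρ₁ → ρ₁ ≤ ρ₂ → ∀ i l, U ρ₁ i l ≤ U ρ₂ i l) ∧
      (∀ ρ : ℝ, 0 ≤ ρ → ∀ i l, U ρ i l ≤ ubar l) ∧
      (∀ i l, Filter.Tendsto (fun ρ => U ρ i l) Filter.atTop (nhds (ubar l))) ∧
      (LocallyLipschitz F →
        ∀ τ σ : ℝ, 0 < τ → 0 < σ →
        (∀ y : ℝ, 0 ≤ y → y ≤ 2 * supNorm (F 0) / γ → τ * y ^ (1 / σ) ≤ π y) →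
        ∃ C₁ : ℝ, 0 < C₁ ∧ ∀ ρ : ℝ, 0 < ρ → ∀ i l,
          0 ≤ ubar l - U ρ i l ∧ ubar l - U ρ i l ≤ C₁ / ρ ^ σ) := by
  haveI : Nonempty (Fin d) := Fin.pos_iff_nonempty.mp (by omega)
  haveI : Nonempty (Fin N) := Fin.pos_iff_nonempty.mp (by omega)
  set R : ℝ := supNorm (F 0) / γ with hRdef
  have hR0 : 0 ≤ R := div_nonneg (supNorm_nonneg _) hγ.le
  have hbd : ∀ ρ : ℝ, 0 ≤ ρ → ∀ i l, |U ρ i l| ≤ R :=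
    fun ρ hρ => U_bound hγ hFmono hπ hU hρ
  have hmon : ∀ {ρ₁ ρ₂ : ℝ}, 0 ≤ ρ₁ → ρ₁ ≤ ρ₂ → ∀ i l, U ρ₁ i l ≤ U ρ₂ i l :=
    fun h1 h12 => U_mono hγ hFmono hπ hU h1 h12
  obtain ⟨K, hK0, hK⟩ := exists_bound_on_ball hFcont R
  have hUK : ∀ ρ : ℝ, 0 ≤ ρ → ∀ i l, |F (U ρ) i l| ≤ K := fun ρ hρ i l =>
    hK _ (mem_cball_of_comp hR0 (hbd ρ hρ)) i l
  have heq : ∀ ρ : ℝ, 0 ≤ ρ → ∀ i l,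
      F (U ρ) i l = ρ * ∑ j ∈ Finset.univ.erase i, π (U ρ j l - 0 - U ρ i l) := by
    intro ρ hρ i l; have := hU ρ hρ i l; linarith
  have hFpos : ∀ ρ : ℝ, 0 ≤ ρ → ∀ i l, 0 ≤ F (U ρ) i l := by
    intro ρ hρ i l
    rw [heq ρ hρ i l]
    exact mul_nonneg hρ (Finset.sum_nonneg fun j _ => pen_nonneg hπ _)
  have hsingle : ∀ ρ : ℝ, 0 ≤ ρ → ∀ i j l, j ≠ i →
      ρ * π (U ρ j l - 0 - U ρ i l) ≤ K := by
    intro ρ hρ i j l hne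
    have hmem : j ∈ Finset.univ.erase i := Finset.mem_erase.mpr ⟨hne, Finset.mem_univ j⟩
    have hle : π (U ρ j l - 0 - U ρ i l)
        ≤ ∑ j' ∈ Finset.univ.erase i, π (U ρ j' l - 0 - U ρ i l) :=
      Finset.single_le_sum (f := fun j' => π (U ρ j' l - 0 - U ρ i l)) (fun j' _ => pen_nonneg hπ _) hmem
    have h1 := heq ρ hρ i l
    have h3 := (abs_le.mp (hUK ρ hρ i l)).2
    nlinarith [mul_le_mul_of_nonneg_left hle hρ]
  -- monotone limits
  set g : Fin d → Fin N → ℝ → ℝ := fun i l ρ => U (max ρ 0) i l with hgdef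
  have hgmono : ∀ i l, Monotone (g i l) := fun i l ρ₁ ρ₂ h =>
    hmon (le_max_right _ _) (max_le_max h le_rfl) i l
  have hgbdd : ∀ i l, BddAbove (Set.range (g i l)) :=
    fun i l => ⟨R, by rintro x ⟨ρ, rfl⟩; exact (abs_le.mp (hbd _ (le_max_right _ _) i l)).2⟩
  set L : Fin d → Fin N → ℝ := fun i l => ⨆ ρ : ℝ, g i l ρ with hLdef
  have hUtend : ∀ i l, Tendsto (fun ρ => U ρ i l) atTop (nhds (L i l)) := by
    intro i l
    apply (tendsto_atTop_ciSup (hgmono i l) (hgbdd i l)).congr'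
    filter_upwards [eventually_ge_atTop (0:ℝ)] with ρ hρ
    simp [hgdef, max_eq_left hρ]
  have hUleL : ∀ ρ : ℝ, 0 ≤ ρ → ∀ i l, U ρ i l ≤ L i l := by
    intro ρ hρ i l
    have h := le_ciSup (hgbdd i l) ρ
    simpa [hgdef, max_eq_left hρ] using h
  -- L independent of i
  have hLeq : ∀ i j l, L i l ≤ L j l := by
    intro i j l
    by_contra hcon
    push_neg at hcon
    have hij : i ≠ j := by rintro rfl; exact lt_irrefl _ hcon
    set a := (L i l - L j l) / 2 with hadef
    have ha0 : 0 < a := by rw [hadef]; linarith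
    have hπa : 0 < π a := hπ.2.2.2 a ha0
    have hev : ∀ᶠ ρ in atTop, L i l - a < U ρ i l :=
      (hUtend i l).eventually (eventually_gt_nhds (by linarith))
    obtain ⟨ρ, h1, h2⟩ := (hev.and (eventually_ge_atTop (max 0 (K / π a + 1)))).exists
    have hρ0 : (0:ℝ) ≤ ρ := le_trans (le_max_left _ _) h2
    have hρK : K / π a + 1 ≤ ρ := le_trans (le_max_right _ _) h2
    have hgap : a ≤ U ρ i l - 0 - U ρ j l := by
      have := hUleL ρ hρ0 j l
      rw [hadef] at h1 ⊢
      linarith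
    have hπle : π a ≤ π (U ρ i l - 0 - U ρ j l) := hπ.2.1 hgap
    have hsb := hsingle ρ hρ0 j i l hij
    nlinarith [mul_le_mul_of_nonneg_left hπle hρ0, div_mul_cancel₀ K (ne_of_gt hπa)]
  have hLconst : ∀ i j l, L i l = L j l := fun i j l =>
    le_antisymm (hLeq i j l) (hLeq j i l)
  set i₀ : Fin d := ⟨0, by omega⟩ with hi₀
  set ub : Fin N → ℝ := fun l => L i₀ l with hub
  have hbig : (fun _ : Fin d => ub) = L := by
    funext j l
    exact hLconst i₀ j l
  have hUtendFull : Tendsto U atTop (nhds L) :=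
    tendsto_pi_nhds.mpr fun i => tendsto_pi_nhds.mpr fun l => hUtend i l
  have hevc : ∀ (i : Fin d) (l : Fin N), Continuous (fun x : Fin d → Fin N → ℝ => x i l) :=
    fun i l => (continuous_apply l).comp (continuous_apply i)
  have hFUtend : ∀ i l, Tendsto (fun ρ => F (U ρ) i l) atTop (nhds (F L i l)) :=
    fun i l => ((hevc i l).tendsto (F L)).comp ((hFcont.tendsto L).comp hUtendFull)
  have hFLpos : ∀ i l, 0 ≤ F L i l := fun i l =>
    ge_of_tendsto (hFUtend i l) ((eventually_ge_atTop (0:ℝ)).mono fun ρ hρ => hFpos ρ hρ i l)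
  have hzero : ∀ l, ∃ i, F L i l = 0 := by
    intro l
    choose s hs using fun n : ℕ => Finite.exists_max (fun i : Fin d => U (n:ℝ) i l)
    have hFs : ∀ n : ℕ, F (U (n:ℝ)) (s n) l = 0 := by
      intro n
      rw [heq _ (Nat.cast_nonneg n), Finset.sum_eq_zero, mul_zero]
      intro j _
      exact hπ.2.2.1 _ (by have := hs n j; linarith)
    obtain ⟨i, hfib⟩ := Finite.exists_infinite_fiber s
    have hinf : (s ⁻¹' {i} : Set ℕ).Infinite := by rw [← Set.infinite_coe_iff]; exact hfib
    have hfreq : ∃ᶠ n : ℕ in atTop, F (U (n:ℝ)) i l = (fun _ : ℕ => (0:ℝ)) n := by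
      rw [frequently_atTop]
      intro a
      obtain ⟨b, hb, hab⟩ := hinf.exists_gt a
      rw [Set.mem_preimage, Set.mem_singleton_iff] at hb
      exact ⟨b, hab.le, by have := hFs b; rwa [hb] at this⟩
    exact ⟨i, tendsto_nhds_unique_of_frequently_eq
      ((hFUtend i l).comp tendsto_natCast_atTop_atTop) tendsto_const_nhds hfreq⟩
  refine ⟨ub, ?_, ?_, ?_, ?_, ?_⟩
  case _ =>
    intro l
    rw [hbig]
    obtain ⟨i, hi⟩ := hzero l
    exact le_antisymm
      (le_trans (ciInf_le (Set.Finite.bddBelow (Set.finite_range _)) i) hi.le)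
      (le_ciInf fun j => hFLpos j l)
  case _ => exact fun ρ₁ ρ₂ h1 h12 i l => hmon h1 h12 i l
  case _ => exact fun ρ hρ i l => le_trans (hUleL ρ hρ i l) (le_of_eq (hLconst i i₀ l))
  case _ =>
    intro i l
    have h := hUtend i l
    have he : L i l = ub l := hLconst i i₀ l
    rwa [he] at h
  case _ =>
    intro hLip τ σ hτ hσ hπlow
    obtain ⟨Lc, hLc0, hLc⟩ := hLip.exists_lipschitz_on_compact
      (isCompact_closedBall (0 : Fin d → Fin N → ℝ) R)
    have hLcc : ∀ u v : Fin d → Fin N → ℝ,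
        u ∈ Metric.closedBall (0 : Fin d → Fin N → ℝ) R →
        v ∈ Metric.closedBall (0 : Fin d → Fin N → ℝ) R →
        ∀ i l, |F u i l - F v i l| ≤ Lc * dist u v := by
      intro u v hu hv i l
      have h1 : |F u i l - F v i l| ≤ dist (F u) (F v) := by
        have h2 := comp_abs_le_norm (F u - F v) i l
        simpa [dist_eq_norm] using h2
      exact le_trans h1 (hLc u hu v hv)
    have hσne : σ ≠ 0 := ne_of_gt hσ
    have hgap : ∀ ρ : ℝ, 0 < ρ → ∀ i j l, U ρ j l - U ρ i l ≤ (K / (τ * ρ)) ^ σ := by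
      intro ρ hρ i j l
      have hKτρ : 0 < K / (τ * ρ) := div_pos hK0 (mul_pos hτ hρ)
      rcases le_or_gt (U ρ j l - U ρ i l) 0 with hy | hy
      · exact le_trans hy (Real.rpow_nonneg hKτρ.le σ)
      · have hne : j ≠ i := by
          rintro rfl; linarith
        have hy2R : U ρ j l - U ρ i l ≤ 2 * supNorm (F 0) / γ := by
          have h1 := (abs_le.mp (hbd ρ hρ.le j l)).2
          have h2 := (abs_le.mp (hbd ρ hρ.le i l)).1
          have h3 : U ρ j l - U ρ i l ≤ 2 * R := by linarith
          calc U ρ j l - U ρ i l ≤ 2 * R := h3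
            _ = 2 * supNorm (F 0) / γ := by rw [hRdef]; ring
        have hπy := hπlow _ hy.le hy2R
        have hs := hsingle ρ hρ.le i j l hne
        have hyy : U ρ j l - 0 - U ρ i l = U ρ j l - U ρ i l := by ring
        rw [hyy] at hs
        have h5 : (U ρ j l - U ρ i l) ^ (1/σ) ≤ K / (τ * ρ) := by
          rw [le_div_iff₀ (mul_pos hτ hρ)]
          nlinarith [Real.rpow_nonneg hy.le (1/σ)]
        have h6 := Real.rpow_le_rpow (Real.rpow_nonneg hy.le (1/σ)) h5 hσ.le
        rwa [← Real.rpow_mul hy.le, one_div, inv_mul_cancel₀ hσne, Real.rpow_one] at h6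
    have hC1pos : 0 < (Lc / γ + 1) * (K / τ) ^ σ :=
      mul_pos (add_pos_of_nonneg_of_pos (div_nonneg hLc0 hγ.le) one_pos)
        (Real.rpow_pos_of_pos (div_pos hK0 hτ) σ)
    refine ⟨(Lc / γ + 1) * (K / τ) ^ σ, hC1pos, fun ρ hρ i l => ?_⟩
    set ε := (K / (τ * ρ)) ^ σ with hεdef
    have hε0 : 0 ≤ ε := Real.rpow_nonneg (div_pos hK0 (mul_pos hτ hρ)).le σ
    choose jmax hjmax using fun l : Fin N => Finite.exists_max (fun j : Fin d => U ρ j l)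
    set w : Fin N → ℝ := fun l => U ρ (jmax l) l with hwdef
    have hwU : ∀ i l, U ρ i l ≤ w l := fun i l => hjmax l i
    have hwe : ∀ i l, w l - U ρ i l ≤ ε := fun i l => hgap ρ hρ i (jmax l) l
    set W : Fin d → Fin N → ℝ := fun _ => w with hWdef
    have hWball : W ∈ Metric.closedBall (0 : Fin d → Fin N → ℝ) R :=
      mem_cball_of_comp hR0 (fun i l => hbd ρ hρ.le (jmax l) l)
    have hUball : U ρ ∈ Metric.closedBall (0 : Fin d → Fin N → ℝ) R :=
      mem_cball_of_comp hR0 (hbd ρ hρ.le)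
    have hdist : dist W (U ρ) ≤ ε := by
      rw [dist_pi_le_iff hε0]
      intro i
      rw [dist_pi_le_iff hε0]
      intro l
      rw [Real.dist_eq, abs_of_nonneg (by linarith [hwU i l])]
      exact hwe i l
    obtain ⟨l₀, hl₀⟩ := Finite.exists_max (fun l : Fin N => L i₀ l - w l)
    have hm : L i₀ l₀ - w l₀ ≤ Lc * ε / γ := by
      rcases le_or_gt (L i₀ l₀ - w l₀) 0 with h | h
      · exact le_trans h (div_nonneg (mul_nonneg hLc0 hε0) hγ.le)
      · obtain ⟨i₁, hi₁⟩ := hzero l₀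
        have hmono := hFmono L W i₁ l₀
          (fun j k => by
            show L j k - w k ≤ L i₁ l₀ - w l₀
            rw [hLconst j i₀ k, hLconst i₁ i₀ l₀]
            exact hl₀ k)
          (by
            show 0 ≤ L i₁ l₀ - w l₀
            rw [hLconst i₁ i₀ l₀]
            exact h.le)
        have hFW : -(Lc * ε) ≤ F W i₁ l₀ := by
          have h1 := (abs_le.mp (hLcc W (U ρ) hWball hUball i₁ l₀)).1
          have h2 := hFpos ρ hρ.le i₁ l₀
          have h4 : Lc * dist W (U ρ) ≤ Lc * ε := mul_le_mul_of_nonneg_left hdist hLc0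
          linarith
        have h5 : W i₁ l₀ = w l₀ := rfl
        rw [hi₁, h5, hLconst i₁ i₀ l₀] at hmono
        rw [le_div_iff₀ hγ]
        nlinarith
    constructor
    · have h1 := hUleL ρ hρ.le i l
      have h2 : L i l = ub l := hLconst i i₀ l
      rw [h2] at h1
      linarith
    · have h1 : L i₀ l - w l ≤ Lc * ε / γ := le_trans (hl₀ l) hm
      have h2 := hwe i l
      have hεeq : ε = (K / τ) ^ σ / ρ ^ σ := by
        rw [hεdef, ← div_div, Real.div_rpow (div_nonneg hK0.le hτ.le) hρ.le]
      have hub' : ub l = L i₀ l := rfl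
      calc ub l - U ρ i l = (L i₀ l - w l) + (w l - U ρ i l) := by rw [hub']; ring
        _ ≤ Lc * ε / γ + ε := by linarith
        _ = (Lc / γ + 1) * ε := by ring
        _ = (Lc / γ + 1) * ((K / τ) ^ σ / ρ ^ σ) := by rw [hεeq]
        _ = (Lc / γ + 1) * (K / τ) ^ σ / ρ ^ σ := by rw [mul_div_assoc]
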